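/- Let A_t be an m_t×N real matrix with every row and every column nonzero, with rows aⁱ for i in the block, and let b_t ∈ ℝ^{m_t}. Let W_t be the m_t×m_t diagonal matrix with i-th diagonal entry 1/‖aⁱ‖², let D_t be the N×N diagonal matrix with j-th diagonal entry 1/s_j where s_j is the number of nonzero entries in the j-th column of A_t, and set Ā_t := A_t·D_t^{1/2}. Then the DROP operator U_t : ℝ^N → ℝ^N defined by U_t(y) := y − Ā_tᵀ·W_t·(Ā_t·y − b_t) is nonexpansive with respect to the Euclidean norm. -/

import Mathlib

/-- Proposition 2 of the paper. Let `A` be an `m_t × N` real matrix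
with every row and every column nonzero and `b ∈ ℝ^{m_t}`. With `W` the diagonal matrix
of inverse squared row norms, `D` the diagonal matrix with `j`-th entry `1/s j` (`s j` the
number of nonzero entries in column `j`), `D^{1/2}` its positive diagonal square root, and
`Ā := A·D^{1/2}`, the DROP operator `U y := y - Āᵀ·W·(Ā·y - b)` is nonexpansive with
respect to the Euclidean norm. -/
theorem drop_operator_nonexpansive
    (mt N : ℕ) (A : Matrix (Fin mt) (Fin N) ℝ) (b : Fin mt → ℝ)
    (hrows : ∀ i, (fun j => A i j) ≠ 0)
    (hcols : ∀ j, ∃ i, A i j ≠ 0)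
    (W : Matrix (Fin mt) (Fin mt) ℝ)
    (hW : W = Matrix.diagonal (fun i => 1 / ∑ j, (A i j) ^ 2))
    (Dhalf : Matrix (Fin N) (Fin N) ℝ)
    (hDhalf : Dhalf = Matrix.diagonal
      (fun j => Real.sqrt (1 / (Set.ncard {i : Fin mt | A i j ≠ 0} : ℝ))))
    (Abar : Matrix (Fin mt) (Fin N) ℝ) (hAbar : Abar = A * Dhalf)
    (U : (Fin N → ℝ) → (Fin N → ℝ))
    (hU : ∀ y, U y = y - Abar.transpose.mulVec (W.mulVec (Abar.mulVec y - b))) :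
    ∀ y1 y2 : Fin N → ℝ,
      Real.sqrt (∑ j, (U y1 j - U y2 j) ^ 2) ≤
        Real.sqrt (∑ j, (y1 j - y2 j) ^ 2) := by
  intro y1 y2
  apply Real.sqrt_le_sqrt
  set w : Fin mt → ℝ := fun i => 1 / ∑ j, (A i j) ^ 2 with hw
  set x : Fin N → ℝ := fun j => y1 j - y2 j with hxdef
  set Av : (Fin N → ℝ) → Fin mt → ℝ := fun v i => ∑ j, Abar i j * v j with hAv
  set Mx : Fin N → ℝ := fun j => ∑ i, Abar i j * (w i * Av x i) with hMxdef
  set T : Fin N → Finset (Fin mt) := fun j => Finset.univ.filter (fun i => A i j ≠ 0)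
    with hT
  set d : Fin N → ℝ := fun j => Real.sqrt (1 / ((T j).card : ℝ)) with hd
  -- row sums positive
  have hrowpos : ∀ i, 0 < ∑ j, (A i j) ^ 2 := by
    intro i
    obtain ⟨j, hj⟩ : ∃ j, A i j ≠ 0 := by
      by_contra h
      push_neg at h
      exact hrows i (funext h)
    exact Finset.sum_pos' (fun j _ => sq_nonneg _)
      ⟨j, Finset.mem_univ j, lt_of_le_of_ne (sq_nonneg _) (Ne.symm (pow_ne_zero 2 hj))⟩
  have hwpos : ∀ i, 0 < w i := fun i => div_pos one_pos (hrowpos i)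
  have hwsum : ∀ i, w i * (∑ j, (A i j) ^ 2) = 1 := fun i =>
    one_div_mul_cancel (ne_of_gt (hrowpos i))
  -- column cardinalities
  have hTcard : ∀ j, (Set.ncard {i : Fin mt | A i j ≠ 0} : ℝ) = ((T j).card : ℝ) := by
    intro j
    congr 1
    rw [← Set.ncard_coe_finset]
    congr 1
    ext i
    simp [hT]
  have hTpos : ∀ j, 0 < ((T j).card : ℝ) := by
    intro j
    obtain ⟨i, hi⟩ := hcols j
    have : i ∈ T j := by simp [hT, hi]
    exact_mod_cast Finset.card_pos.mpr ⟨i, this⟩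
  have hdsq : ∀ j, d j ^ 2 = 1 / ((T j).card : ℝ) := by
    intro j
    exact Real.sq_sqrt (by positivity)
  have hAB : ∀ i j, Abar i j = A i j * d j := by
    intro i j
    rw [hAbar, hDhalf, Matrix.mul_diagonal, hTcard, hd]
  -- key quadratic bound: Q v ≤ ‖v‖²
  have hQnn : ∀ v : Fin N → ℝ, 0 ≤ ∑ i, w i * (Av v i) ^ 2 :=
    fun v => Finset.sum_nonneg fun i _ =>
      mul_nonneg (le_of_lt (hwpos i)) (sq_nonneg _)
  have hQle : ∀ v : Fin N → ℝ, (∑ i, w i * (Av v i) ^ 2) ≤ ∑ j, (v j) ^ 2 := by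
    intro v
    have hrowbd : ∀ i, w i * (Av v i) ^ 2 ≤
        ∑ j, (if A i j ≠ 0 then d j ^ 2 * (v j) ^ 2 else 0) := by
      intro i
      have h1 : Av v i = ∑ j, A i j * (if A i j ≠ 0 then d j * v j else 0) := by
        apply Finset.sum_congr rfl
        intro j _
        by_cases h : A i j = 0 <;> simp [hAv, hAB, h, mul_assoc]
      have hCS := Finset.sum_mul_sq_le_sq_mul_sq Finset.univ
        (fun j => A i j) (fun j => if A i j ≠ 0 then d j * v j else 0)
      rw [← h1] at hCS
      have h2 : ∀ j, (if A i j ≠ 0 then d j * v j else 0) ^ 2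
          = (if A i j ≠ 0 then d j ^ 2 * (v j) ^ 2 else 0) := by
        intro j
        by_cases h : A i j = 0 <;> simp [h, mul_pow]
      simp only [h2] at hCS
      calc w i * (Av v i) ^ 2
          ≤ w i * ((∑ j, (A i j) ^ 2) *
              ∑ j, (if A i j ≠ 0 then d j ^ 2 * (v j) ^ 2 else 0)) :=
            mul_le_mul_of_nonneg_left hCS (le_of_lt (hwpos i))
        _ = (w i * (∑ j, (A i j) ^ 2)) *
              ∑ j, (if A i j ≠ 0 then d j ^ 2 * (v j) ^ 2 else 0) := by ring
        _ = ∑ j, (if A i j ≠ 0 then d j ^ 2 * (v j) ^ 2 else 0) := by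
            rw [hwsum i, one_mul]
    calc (∑ i, w i * (Av v i) ^ 2)
        ≤ ∑ i, ∑ j, (if A i j ≠ 0 then d j ^ 2 * (v j) ^ 2 else 0) :=
          Finset.sum_le_sum fun i _ => hrowbd i
      _ = ∑ j, ∑ i, (if A i j ≠ 0 then d j ^ 2 * (v j) ^ 2 else 0) := Finset.sum_comm
      _ = ∑ j, (v j) ^ 2 := by
          apply Finset.sum_congr rfl
          intro j _
          rw [← Finset.sum_filter]
          rw [Finset.sum_const, nsmul_eq_mul]
          rw [hdsq j]
          have := ne_of_gt (hTpos j)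
          field_simp
          rfl
  -- inner product identity
  have hkey : ∀ u : Fin N → ℝ, (∑ j, u j * Mx j) = ∑ i, w i * Av x i * Av u i := by
    intro u
    calc (∑ j, u j * Mx j)
        = ∑ j, ∑ i, w i * Av x i * (Abar i j * u j) := by
          apply Finset.sum_congr rfl
          intro j _
          rw [hMxdef]
          simp only []
          rw [Finset.mul_sum]
          apply Finset.sum_congr rfl
          intro i _
          ring
      _ = ∑ i, ∑ j, w i * Av x i * (Abar i j * u j) := Finset.sum_comm
      _ = ∑ i, w i * Av x i * Av u i := by
          apply Finset.sum_congr rfl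
          intro i _
          rw [hAv]
          simp only []
          rw [← Finset.mul_sum]
  have hxMx : (∑ j, x j * Mx j) = ∑ i, w i * (Av x i) ^ 2 := by
    rw [hkey x]
    apply Finset.sum_congr rfl
    intro i _
    ring
  have hMxsq : (∑ j, Mx j ^ 2) = ∑ i, w i * Av x i * Av Mx i := by
    rw [← hkey Mx]
    apply Finset.sum_congr rfl
    intro j _
    ring
  -- Cauchy-Schwarz for the bilinear form
  have hBCS : (∑ i, w i * Av x i * Av Mx i) ^ 2 ≤
      (∑ i, w i * (Av x i) ^ 2) * (∑ i, w i * (Av Mx i) ^ 2) := by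
    have hCS := Finset.sum_mul_sq_le_sq_mul_sq Finset.univ
      (fun i => Real.sqrt (w i) * Av x i) (fun i => Real.sqrt (w i) * Av Mx i)
    have e1 : ∀ i : Fin mt, (Real.sqrt (w i) * Av x i) * (Real.sqrt (w i) * Av Mx i)
        = w i * Av x i * Av Mx i := by
      intro i
      have h : Real.sqrt (w i) * Real.sqrt (w i) = w i :=
        Real.mul_self_sqrt (le_of_lt (hwpos i))
      linear_combination Av x i * Av Mx i * h
    have e2 : ∀ i : Fin mt, (Real.sqrt (w i) * Av x i) ^ 2 = w i * (Av x i) ^ 2 := by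
      intro i
      rw [mul_pow, Real.sq_sqrt (le_of_lt (hwpos i))]
    have e3 : ∀ i : Fin mt, (Real.sqrt (w i) * Av Mx i) ^ 2 = w i * (Av Mx i) ^ 2 := by
      intro i
      rw [mul_pow, Real.sq_sqrt (le_of_lt (hwpos i))]
    simp only [e1, e2, e3] at hCS
    exact hCS
  -- ‖Mx‖² ≤ Q x
  have hPle : (∑ j, Mx j ^ 2) ≤ ∑ i, w i * (Av x i) ^ 2 := by
    have hPnn : 0 ≤ ∑ j, Mx j ^ 2 := Finset.sum_nonneg fun j _ => sq_nonneg _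
    have hQnn' : 0 ≤ ∑ i, w i * (Av x i) ^ 2 := hQnn x
    have h1 : (∑ j, Mx j ^ 2) ^ 2 ≤
        (∑ i, w i * (Av x i) ^ 2) * (∑ i, w i * (Av Mx i) ^ 2) := by
      rw [hMxsq]; exact hBCS
    have h2 : (∑ i, w i * (Av Mx i) ^ 2) ≤ ∑ j, Mx j ^ 2 := hQle Mx
    have h3 : (∑ j, Mx j ^ 2) ^ 2 ≤ (∑ i, w i * (Av x i) ^ 2) * (∑ j, Mx j ^ 2) :=
      le_trans h1 (mul_le_mul_of_nonneg_left h2 hQnn')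
    nlinarith [h3, hPnn, hQnn']
  -- the difference is x - Mx
  have hAvx : ∀ i, Av x i = Av y1 i - Av y2 i := by
    intro i
    rw [hAv]
    simp only [hxdef]
    rw [← Finset.sum_sub_distrib]
    apply Finset.sum_congr rfl
    intro j _
    ring
  have hterm : ∀ i j, Abar i j * (w i * Av x i) =
      Abar i j * (w i * ((∑ k, Abar i k * y1 k) - b i)) -
      Abar i j * (w i * ((∑ k, Abar i k * y2 k) - b i)) := by
    intro i j
    rw [hAvx i]
    simp only [hAv]
    ring
  have hdiff : ∀ j, U y1 j - U y2 j = x j - Mx j := by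
    intro j
    rw [hU y1, hU y2]
    simp only [Pi.sub_apply, hW, Matrix.mulVec, dotProduct,
      Matrix.transpose_apply, Matrix.diagonal_apply, ite_mul, zero_mul,
      Finset.sum_ite_eq, Finset.mem_univ, if_true]
    rw [hMxdef]
    simp only [hxdef]
    rw [show (∑ i, Abar i j * (w i * Av x i)) =
        ∑ i, (Abar i j * (w i * ((∑ k, Abar i k * y1 k) - b i)) -
          Abar i j * (w i * ((∑ k, Abar i k * y2 k) - b i))) from
      Finset.sum_congr rfl (fun i _ => hterm i j)]
    rw [Finset.sum_sub_distrib]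
    ring
  calc (∑ j, (U y1 j - U y2 j) ^ 2) = ∑ j, (x j - Mx j) ^ 2 := by
        apply Finset.sum_congr rfl
        intro j _
        rw [hdiff j]
    _ = ∑ j, (x j ^ 2 - 2 * (x j * Mx j) + Mx j ^ 2) := by
        apply Finset.sum_congr rfl
        intro j _
        ring
    _ = (∑ j, x j ^ 2) - 2 * (∑ j, x j * Mx j) + ∑ j, Mx j ^ 2 := by
        rw [Finset.sum_add_distrib, Finset.sum_sub_distrib, ← Finset.mul_sum]
    _ ≤ ∑ j, (y1 j - y2 j) ^ 2 := by
        have h1 := hQle x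
        have h2 := hQnn x
        have hx2 : (∑ j, x j ^ 2) = ∑ j, (y1 j - y2 j) ^ 2 := by
          apply Finset.sum_congr rfl; intro j _; rw [hxdef]
        rw [hxMx, hx2]
        rw [hx2] at h1
        linarith [hPle]
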